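/- Let (q₁, q₂, p₁, p₂) : ℝ → ℝ⁴ be differentiable functions satisfying Hamilton's equations q̇₁ = p₁(q₁² + q₂²), q̇₂ = p₂(q₁² + q₂²), ṗ₁ = −q₁(p₁² − p₂²) − 2p₁p₂q₂, ṗ₂ = −q₂(p₂² − p₁²) − 2p₁p₂q₁, with q₁(t)² + q₂(t)² > 0 for all t, and suppose the arc-length condition q̇₁(t)² + q̇₂(t)² = 1 holds for all t. Then the function t ↦ q₁(t)² + q₂(t)² is constant. -/

import Mathlib

/-- If `(q₁,q₂,p₁,p₂)` are differentiable, satisfy Hamilton's equations,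
`q₁(t)² + q₂(t)² > 0` for all `t`, and the arc-length condition `q̇₁² + q̇₂² = 1` holds
for all `t`, then `t ↦ q₁(t)² + q₂(t)²` is constant. -/
theorem stmt_5 (q₁ q₂ p₁ p₂ : ℝ → ℝ)
    (hq₁ : Differentiable ℝ q₁) (hq₂ : Differentiable ℝ q₂)
    (hp₁ : Differentiable ℝ p₁) (hp₂ : Differentiable ℝ p₂)
    (hpos : ∀ t, 0 < q₁ t ^ 2 + q₂ t ^ 2)
    (heq1 : ∀ t, deriv q₁ t = p₁ t * (q₁ t ^ 2 + q₂ t ^ 2))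
    (heq2 : ∀ t, deriv q₂ t = p₂ t * (q₁ t ^ 2 + q₂ t ^ 2))
    (heq3 : ∀ t, deriv p₁ t = -q₁ t * (p₁ t ^ 2 - p₂ t ^ 2) - 2 * p₁ t * p₂ t * q₂ t)
    (heq4 : ∀ t, deriv p₂ t = -q₂ t * (p₂ t ^ 2 - p₁ t ^ 2) - 2 * p₁ t * p₂ t * q₁ t)
    (harc : ∀ t, (deriv q₁ t)^2 + (deriv q₂ t)^2 = 1) :
    ∃ K : ℝ, ∀ t, q₁ t ^ 2 + q₂ t ^ 2 = K := by
  set g : ℝ → ℝ := fun t =>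
    (p₁ t * q₁ t + p₂ t * q₂ t) ^ 2 + (p₁ t * q₂ t - p₂ t * q₁ t) ^ 2 with hg
  -- g has zero derivative everywhere
  have hgd : ∀ t, HasDerivAt g 0 t := by
    intro t
    have H1 : HasDerivAt q₁ (p₁ t * (q₁ t ^ 2 + q₂ t ^ 2)) t := by
      have := (hq₁ t).hasDerivAt; rwa [heq1 t] at this
    have H2 : HasDerivAt q₂ (p₂ t * (q₁ t ^ 2 + q₂ t ^ 2)) t := by
      have := (hq₂ t).hasDerivAt; rwa [heq2 t] at this
    have H3 : HasDerivAt p₁ (-q₁ t * (p₁ t ^ 2 - p₂ t ^ 2) - 2 * p₁ t * p₂ t * q₂ t) t := by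
      have := (hp₁ t).hasDerivAt; rwa [heq3 t] at this
    have H4 : HasDerivAt p₂ (-q₂ t * (p₂ t ^ 2 - p₁ t ^ 2) - 2 * p₁ t * p₂ t * q₁ t) t := by
      have := (hp₂ t).hasDerivAt; rwa [heq4 t] at this
    have := (((H3.mul H1).add (H4.mul H2)).pow 2).add (((H3.mul H2).sub (H4.mul H1)).pow 2)
    refine HasDerivAt.congr_deriv (f := g) this ?_
    simp only [Pi.add_apply, Pi.mul_apply, Pi.sub_apply]
    norm_num
    ring
  -- hence g is constant
  have hgconst : ∀ t, g t = g 0 := by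
    intro t
    exact is_const_of_deriv_eq_zero (fun s => (hgd s).differentiableAt)
      (fun s => (hgd s).deriv) t 0
  -- arc-length condition: g t * (q₁ t ^2 + q₂ t ^2) = 1
  have harc' : ∀ t, g t * (q₁ t ^ 2 + q₂ t ^ 2) = 1 := by
    intro t
    have := harc t
    rw [heq1 t, heq2 t] at this
    calc g t * (q₁ t ^ 2 + q₂ t ^ 2)
        = (p₁ t * (q₁ t ^ 2 + q₂ t ^ 2)) ^ 2 + (p₂ t * (q₁ t ^ 2 + q₂ t ^ 2)) ^ 2 := by
          simp only [hg]; ring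
      _ = 1 := this
  refine ⟨q₁ 0 ^ 2 + q₂ 0 ^ 2, fun t => ?_⟩
  have hg0 : g 0 ≠ 0 := by
    intro h
    have := harc' 0
    rw [h] at this
    simp at this
  have h1 := harc' t
  rw [hgconst t] at h1
  have h2 := harc' 0
  have := h1.trans h2.symm
  exact mul_left_cancel₀ hg0 this
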